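/- Let m ≥ 1, R ≥ 1, let ν₁, …, ν_R ≥ 0 be real numbers, and let e₁, …, e_R and ẽ₁, …, ẽ_R and s be unit vectors in ℂ^m. Then | Σ_{i=1}^R ν_i²·(|e_iᴴs|² − |ẽ_iᴴs|²) | ≤ 2·Σ_{i=1}^R ν_i²·d(e_i, ẽ_i), where d(u, v) = √(1 − |uᴴv|²). -/

import Mathlib

/-- Euclidean norm of a complex vector. -/
noncomputable def cnorm {k : ℕ} (v : Fin k → ℂ) : ℝ :=
  Real.sqrt (∑ i, ‖v i‖ ^ 2)

/-- Chordal distance between complex vectors: `d(u,v) = √(1 − |uᴴv|²)`. -/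
noncomputable def cdist {k : ℕ} (u v : Fin k → ℂ) : ℝ :=
  Real.sqrt (1 - ‖dotProduct (star u) v‖ ^ 2)

open scoped InnerProductSpace

/-- Key inequality: for unit vectors, `|⟨u,s⟩| ≤ |⟨v,s⟩| + √(1 − |⟨v,u⟩|²)`. -/
lemma key_ineq {m : ℕ} (u v s : EuclideanSpace ℂ (Fin m))
    (hu : ‖u‖ = 1) (hv : ‖v‖ = 1) (hs : ‖s‖ = 1) :
    ‖⟪u, s⟫_ℂ‖ ≤ ‖⟪v, s⟫_ℂ‖ + Real.sqrt (1 - ‖⟪v, u⟫_ℂ‖ ^ 2) := by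
  set c : ℂ := ⟪v, u⟫_ℂ with hc
  set w : EuclideanSpace ℂ (Fin m) := u - c • v with hw
  have hcle : ‖c‖ ≤ 1 := by
    have := norm_inner_le_norm (𝕜 := ℂ) v u
    simpa [hu, hv] using this
  have hinner_uv : ⟪u, v⟫_ℂ = (starRingEnd ℂ) c := by
    rw [hc, inner_conj_symm]
  have hwn : ‖w‖ ^ 2 = 1 - ‖c‖ ^ 2 := by
    have h := norm_sub_sq (𝕜 := ℂ) u (c • v)
    have h1 : ⟪u, c • v⟫_ℂ = (‖c‖ ^ 2 : ℂ) := by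
      rw [inner_smul_right, hinner_uv, Complex.mul_conj']
    have h2 : RCLike.re ⟪u, c • v⟫_ℂ = ‖c‖ ^ 2 := by
      rw [h1]; norm_cast
    rw [hw]
    rw [h, h2, hu, norm_smul, hv]
    simp; ring
  have hwnorm : ‖w‖ = Real.sqrt (1 - ‖c‖ ^ 2) := by
    rw [← hwn, Real.sqrt_sq (norm_nonneg w)]
  have hdecomp : ⟪u, s⟫_ℂ = (starRingEnd ℂ) c * ⟪v, s⟫_ℂ + ⟪w, s⟫_ℂ := by
    rw [hw, inner_sub_left, inner_smul_left]
    ring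
  calc ‖⟪u, s⟫_ℂ‖ ≤ ‖(starRingEnd ℂ) c * ⟪v, s⟫_ℂ‖ + ‖⟪w, s⟫_ℂ‖ := by
        rw [hdecomp]; exact norm_add_le _ _
    _ ≤ ‖⟪v, s⟫_ℂ‖ + Real.sqrt (1 - ‖c‖ ^ 2) := by
        have h1 : ‖(starRingEnd ℂ) c * ⟪v, s⟫_ℂ‖ ≤ ‖⟪v, s⟫_ℂ‖ := by
          rw [norm_mul, RCLike.norm_conj]
          nlinarith [norm_nonneg (⟪v, s⟫_ℂ), norm_nonneg c]
        have h2 : ‖⟪w, s⟫_ℂ‖ ≤ Real.sqrt (1 - ‖c‖ ^ 2) := by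
          calc ‖⟪w, s⟫_ℂ‖ ≤ ‖w‖ * ‖s‖ := norm_inner_le_norm _ _
            _ = Real.sqrt (1 - ‖c‖ ^ 2) := by rw [hs, hwnorm, mul_one]
        linarith

/-- Quantizing each singular vector `eᵢ` to `ẽᵢ` perturbs the direct-link received power by
at most `2 Σ νᵢ² d(eᵢ, ẽᵢ)`:
`| Σ νᵢ² (|eᵢᴴs|² − |ẽᵢᴴs|²) | ≤ 2 Σ νᵢ² d(eᵢ, ẽᵢ)`. -/
theorem stmt15 (m R : ℕ) (hm : 1 ≤ m) (hR : 1 ≤ R)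
    (ν : Fin R → ℝ) (hν : ∀ i, 0 ≤ ν i)
    (e et : Fin R → Fin m → ℂ) (s : Fin m → ℂ)
    (he : ∀ i, cnorm (e i) = 1) (het : ∀ i, cnorm (et i) = 1) (hs : cnorm s = 1) :
    |∑ i, ν i ^ 2 * (‖dotProduct (star (e i)) s‖ ^ 2 -
        ‖dotProduct (star (et i)) s‖ ^ 2)| ≤
      2 * ∑ i, ν i ^ 2 * cdist (e i) (et i) := by
  -- bridge to EuclideanSpace
  have hdot : ∀ u v : Fin m → ℂ, dotProduct (star u) v =
      ⟪((WithLp.equiv 2 _).symm u : EuclideanSpace ℂ (Fin m)), (WithLp.equiv 2 _).symm v⟫_ℂ := by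
    intro u v
    simp [dotProduct, PiLp.inner_apply, RCLike.inner_apply, mul_comm]
  have hnorm : ∀ u : Fin m → ℂ,
      cnorm u = ‖((WithLp.equiv 2 _).symm u : EuclideanSpace ℂ (Fin m))‖ := by
    intro u; rw [EuclideanSpace.norm_eq]; rfl
  set S : EuclideanSpace ℂ (Fin m) := (WithLp.equiv 2 _).symm s with hS
  have hSn : ‖S‖ = 1 := by rw [← hnorm]; exact hs
  -- per-term bound
  have hterm : ∀ i, |‖dotProduct (star (e i)) s‖ ^ 2 -
      ‖dotProduct (star (et i)) s‖ ^ 2| ≤ 2 * cdist (e i) (et i) := by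
    intro i
    set E : EuclideanSpace ℂ (Fin m) := (WithLp.equiv 2 _).symm (e i) with hE
    set T : EuclideanSpace ℂ (Fin m) := (WithLp.equiv 2 _).symm (et i) with hT
    have hEn : ‖E‖ = 1 := by rw [← hnorm]; exact he i
    have hTn : ‖T‖ = 1 := by rw [← hnorm]; exact het i
    set a : ℝ := ‖⟪E, S⟫_ℂ‖ with ha
    set b : ℝ := ‖⟪T, S⟫_ℂ‖ with hb
    set c : ℝ := ‖⟪E, T⟫_ℂ‖ with hc
    have hcsym : ‖⟪T, E⟫_ℂ‖ = c := by rw [hc, ← inner_conj_symm]; exact RCLike.norm_conj _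
    have ha1 : a ≤ 1 := by
      have := norm_inner_le_norm (𝕜 := ℂ) E S; simpa [hEn, hSn, ← ha] using this
    have hb1 : b ≤ 1 := by
      have := norm_inner_le_norm (𝕜 := ℂ) T S; simpa [hTn, hSn, ← hb] using this
    have hc1 : c ≤ 1 := by
      have := norm_inner_le_norm (𝕜 := ℂ) E T; simpa [hEn, hTn, ← hc] using this
    have h1 : a ≤ b + Real.sqrt (1 - c ^ 2) := by
      have := key_ineq E T S hEn hTn hSn
      rwa [hcsym] at this
    have h2 : b ≤ a + Real.sqrt (1 - c ^ 2) := by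
      have := key_ineq T E S hTn hEn hSn
      rwa [← hc] at this
    have hdistval : cdist (e i) (et i) = Real.sqrt (1 - c ^ 2) := by
      rw [cdist, hdot, ← hc]
    rw [hdistval]
    have hd0 : 0 ≤ Real.sqrt (1 - c ^ 2) := Real.sqrt_nonneg _
    have hdot1 : dotProduct (star (e i)) s = ⟪E, S⟫_ℂ := by rw [hdot]
    have hdot2 : dotProduct (star (et i)) s = ⟪T, S⟫_ℂ := by rw [hdot]
    rw [hdot1, hdot2, ← ha, ← hb]
    rw [abs_le]
    constructor <;> nlinarith [norm_nonneg (⟪E, S⟫_ℂ), norm_nonneg (⟪T, S⟫_ℂ)]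
  -- sum up
  calc |∑ i, ν i ^ 2 * (‖dotProduct (star (e i)) s‖ ^ 2 -
        ‖dotProduct (star (et i)) s‖ ^ 2)| ≤
      ∑ i, |ν i ^ 2 * (‖dotProduct (star (e i)) s‖ ^ 2 -
        ‖dotProduct (star (et i)) s‖ ^ 2)| := Finset.abs_sum_le_sum_abs _ _
    _ ≤ ∑ i, ν i ^ 2 * (2 * cdist (e i) (et i)) := by
        apply Finset.sum_le_sum
        intro i _
        rw [abs_mul, abs_of_nonneg (sq_nonneg (ν i))]
        exact mul_le_mul_of_nonneg_left (hterm i) (sq_nonneg (ν i))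
    _ = 2 * ∑ i, ν i ^ 2 * cdist (e i) (et i) := by
        rw [Finset.mul_sum]; congr 1; ext i; ring
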